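/- Fix an integer n ≥ 1 and a real β ≥ n, and define A_β = ⋃_{m=1}^{∞} ⋃_{j=1}^{2^{⌊mβ⌋}} P_{mj} ⊂ ℝ^{n+1}, where P_{mj} = {y_{mj}} × [0, 2^{−m}]^n with y_{mj} = 2^{−m} + j·2^{−m−⌊mβ⌋}. Then there exists a constant c > 0 such that for every integer k ≥ 1, every cover of A_β by sets of diameter at most 2^{−k} has at least c·2^{(n+1)kβ/(β+1)} members. -/

import Mathlib

open MeasureTheory Set

/-- The spacing `a_m = 2^{-m-⌊mβ⌋}` of the construction. -/
noncomputable def fractalSpacing (β : ℝ) (m : ℕ) : ℝ :=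
  (2 : ℝ) ^ (-(m : ℝ) - (⌊(m : ℝ) * β⌋ : ℝ))

/-- The right endpoints `y_{mj} = 2^{-m} + j·a_m`. -/
noncomputable def fractalPoint (β : ℝ) (m j : ℕ) : ℝ :=
  (2 : ℝ) ^ (-(m : ℝ)) + (j : ℝ) * fractalSpacing β m

/-- The `n`-dimensional plaque `P_{mj} = {y_{mj}} × [0,2^{-m}]^n`. -/
noncomputable def fractalPlaque (n : ℕ) (β : ℝ) (m j : ℕ) :
    Set (EuclideanSpace ℝ (Fin (n + 1))) :=
  {x | x 0 = fractalPoint β m j ∧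
       ∀ i : Fin (n + 1), i ≠ 0 → x i ∈ Icc (0 : ℝ) ((2 : ℝ) ^ (-(m : ℝ)))}

/-- The set `A_β = ⋃_{m≥1} ⋃_{j=1}^{2^{⌊mβ⌋}} P_{mj}`. -/
noncomputable def fractalPlaqueUnion (n : ℕ) (β : ℝ) :
    Set (EuclideanSpace ℝ (Fin (n + 1))) :=
  ⋃ (m : ℕ) (_ : 1 ≤ m) (j : ℕ) (_ : 1 ≤ j) (_ : j ≤ 2 ^ (⌊(m : ℝ) * β⌋.toNat)),
    fractalPlaque n β m j

lemma one_le_abs_natCast_sub {a b : ℕ} (h : a ≠ b) : (1:ℝ) ≤ |(a:ℝ) - (b:ℝ)| := by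
  have h' : ((a:ℤ) - b) ≠ 0 := sub_ne_zero.2 (by exact_mod_cast h)
  have h2 := Int.one_le_abs h'
  calc (1:ℝ) = ((1:ℤ):ℝ) := by norm_num
  _ ≤ ((|(a:ℤ) - b| : ℤ) : ℝ) := by exact_mod_cast h2
  _ = |(a:ℝ) - (b:ℝ)| := by push_cast; ring_nf

lemma coord_abs_le_dist {n : ℕ} (x y : EuclideanSpace ℝ (Fin n)) (i : Fin n) :
    |x i - y i| ≤ dist x y := by
  rw [EuclideanSpace.dist_eq, ← Real.sqrt_sq_eq_abs]
  apply Real.sqrt_le_sqrt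
  have := Finset.single_le_sum (f := fun j => dist (x j) (y j) ^ 2)
    (fun j _ => sq_nonneg _) (Finset.mem_univ i)
  simpa [Real.dist_eq, sq_abs] using this

lemma card_le_of_separated {X : Type*} [MetricSpace X] (A : Set X)
    (F : Finset (Set X)) (hcov : A ⊆ ⋃₀ (F : Set (Set X))) (r : ℝ)
    (hdiam : ∀ U ∈ F, EMetric.diam U ≤ ENNReal.ofReal r) (s : Finset X)
    (hs : ↑s ⊆ A) (hsep : ∀ p ∈ s, ∀ q ∈ s, p ≠ q → r < dist p q) :
    s.card ≤ F.card := by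
  classical
  have hex : ∀ p ∈ s, ∃ U ∈ F, p ∈ U := by
    intro p hp
    rcases hcov (hs hp) with ⟨U, hU, hpU⟩
    exact ⟨U, hU, hpU⟩
  set g : X → Set X := fun p => if h : ∃ U ∈ F, p ∈ U then h.choose else ∅ with hg
  have hgF : ∀ p ∈ s, g p ∈ F := by
    intro p hp
    have h := hex p hp
    simp only [hg, dif_pos h]
    exact h.choose_spec.1
  have hgmem : ∀ p ∈ s, p ∈ g p := by
    intro p hp
    have h := hex p hp
    simp only [hg, dif_pos h]
    exact h.choose_spec.2
  apply Finset.card_le_card_of_injOn g hgF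
  intro p hp q hq hpq
  by_contra hne
  have h1 : edist p q ≤ EMetric.diam (g p) :=
    EMetric.edist_le_diam_of_mem (hgmem p hp) (hpq ▸ hgmem q hq)
  have h2 : edist p q ≤ ENNReal.ofReal r := h1.trans (hdiam _ (hgF p hp))
  have h3 : dist p q ≤ r := by
    have hr : 0 ≤ r := by
      by_contra hr
      simp [ENNReal.ofReal_eq_zero.2 (le_of_lt (not_le.1 hr))] at h2
      exact hne h2
    rwa [edist_dist, ENNReal.ofReal_le_ofReal_iff hr] at h2
  exact absurd h3 (not_le.2 (hsep p hp q hq hne))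

lemma key_count (n : ℕ) (β : ℝ) (hβ : 1 ≤ β) (k m : ℕ) (hm : 1 ≤ m) (hk : 1 ≤ k)
    (hmk : m + (⌊(m:ℝ)*β⌋).toNat ≤ k - 1)
    (F : Finset (Set (EuclideanSpace ℝ (Fin (n+1)))))
    (hcov : fractalPlaqueUnion n β ⊆ ⋃₀ (F : Set (Set (EuclideanSpace ℝ (Fin (n+1))))))
    (hdiam : ∀ U ∈ F, EMetric.diam U ≤ ENNReal.ofReal ((2:ℝ)^(-(k:ℝ)))) :
    2 ^ ((⌊(m:ℝ)*β⌋).toNat + (k - 1 - m) * n) ≤ F.card := by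
  classical
  set Mβ : ℕ := (⌊(m:ℝ)*β⌋).toNat with hMβ
  have hfloor_nonneg : (0:ℤ) ≤ ⌊(m:ℝ)*β⌋ := by
    apply Int.floor_nonneg.2
    positivity
  have hMβcast : ((Mβ : ℤ) : ℝ) = ((⌊(m:ℝ)*β⌋ : ℤ) : ℝ) := by
    rw [hMβ, Int.toNat_of_nonneg hfloor_nonneg]
  have hmk' : m ≤ k - 1 := le_trans (Nat.le_add_right _ _) hmk
  have hk1 : ((k:ℝ) - 1) = ((k - 1 : ℕ) : ℝ) := by
    rw [Nat.cast_sub hk]; norm_num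
  set step : ℝ := (2:ℝ) ^ (1 - (k:ℝ)) with hstepdef
  have hstep_pos : 0 < step := Real.rpow_pos_of_pos two_pos _
  have hlt : (2:ℝ) ^ (-(k:ℝ)) < step := by
    apply Real.rpow_lt_rpow_left_iff (x := (2:ℝ)) (by norm_num) |>.2
    linarith
  have hspacing : step ≤ fractalSpacing β m := by
    rw [fractalSpacing, hstepdef]
    apply Real.rpow_le_rpow_left_iff (x := (2:ℝ)) (by norm_num) |>.2
    have : (m:ℝ) + (Mβ:ℝ) ≤ (k:ℝ) - 1 := by
      rw [hk1]
      exact_mod_cast hmk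
    have h2 : ((⌊(m:ℝ)*β⌋ : ℤ) : ℝ) = (Mβ:ℝ) := by exact_mod_cast hMβcast.symm
    rw [h2]; linarith
  set T : ℕ := 2 ^ (k - 1 - m) with hT
  set pt : ℕ × (Fin n → ℕ) → EuclideanSpace ℝ (Fin (n+1)) :=
    fun a => WithLp.toLp 2 (fun i : Fin (n+1) => if h : i = 0 then fractalPoint β m a.1 else (a.2 (i.pred h) : ℝ) * step)
    with hpt
  have hpt0 : ∀ a, pt a 0 = fractalPoint β m a.1 := fun a => by simp [hpt]
  have hptsucc : ∀ a (i : Fin n), pt a i.succ = (a.2 i : ℝ) * step := by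
    intro a i
    simp only [hpt, PiLp.toLp_apply]
    rw [dif_neg (Fin.succ_ne_zero i), Fin.pred_succ]
  have hptne : ∀ a (i : Fin (n+1)) (h : i ≠ 0), pt a i = (a.2 (i.pred h) : ℝ) * step := by
    intro a i h
    simp only [hpt, PiLp.toLp_apply]
    rw [dif_neg h]
  set idx : Finset (ℕ × (Fin n → ℕ)) :=
    (Finset.Icc 1 (2 ^ Mβ)) ×ˢ Fintype.piFinset (fun _ : Fin n => Finset.range T) with hidx
  -- separation
  have hsep : ∀ a ∈ idx, ∀ b ∈ idx, a ≠ b → (2:ℝ)^(-(k:ℝ)) < dist (pt a) (pt b) := by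
    intro a _ b _ hab
    rcases eq_or_ne a.1 b.1 with h1 | h1
    · have h2 : a.2 ≠ b.2 := fun h => hab (Prod.ext h1 h)
      obtain ⟨i, hi⟩ := Function.ne_iff.1 h2
      have hcoord : step ≤ |pt a i.succ - pt b i.succ| := by
        rw [hptsucc, hptsucc, ← sub_mul, abs_mul, abs_of_pos hstep_pos]
        nlinarith [one_le_abs_natCast_sub hi, hstep_pos]
      calc (2:ℝ)^(-(k:ℝ)) < step := hlt
      _ ≤ |pt a i.succ - pt b i.succ| := hcoord
      _ ≤ dist (pt a) (pt b) := coord_abs_le_dist _ _ _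
    · have hcoord : step ≤ |pt a 0 - pt b 0| := by
        rw [hpt0, hpt0, fractalPoint, fractalPoint]
        have : (2:ℝ)^(-(m:ℝ)) + (a.1:ℝ) * fractalSpacing β m -
            ((2:ℝ)^(-(m:ℝ)) + (b.1:ℝ) * fractalSpacing β m)
            = ((a.1:ℝ) - (b.1:ℝ)) * fractalSpacing β m := by ring
        have hsp_pos : 0 < fractalSpacing β m := by
          rw [fractalSpacing]; positivity
        rw [this, abs_mul, abs_of_pos hsp_pos]
        nlinarith [one_le_abs_natCast_sub h1, hspacing, hstep_pos, hsp_pos]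
      calc (2:ℝ)^(-(k:ℝ)) < step := hlt
      _ ≤ |pt a 0 - pt b 0| := hcoord
      _ ≤ dist (pt a) (pt b) := coord_abs_le_dist _ _ _
  -- membership
  have hmem : ∀ a ∈ idx, pt a ∈ fractalPlaqueUnion n β := by
    intro a ha
    rw [hidx, Finset.mem_product, Finset.mem_Icc, Fintype.mem_piFinset] at ha
    obtain ⟨⟨hj1, hj2⟩, hf⟩ := ha
    refine Set.mem_iUnion.2 ⟨m, Set.mem_iUnion.2 ⟨hm, Set.mem_iUnion.2 ⟨a.1,
      Set.mem_iUnion.2 ⟨hj1, Set.mem_iUnion.2 ⟨hj2, ?_, ?_⟩⟩⟩⟩⟩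
    · exact hpt0 a
    · intro i hi
      rw [hptne a i hi]
      constructor
      · positivity
      · have h1 : (a.2 (i.pred hi) : ℝ) ≤ (T:ℝ) := by
          exact_mod_cast (Finset.mem_range.1 (hf (i.pred hi))).le
        have h2 : (T:ℝ) * step = (2:ℝ)^(-(m:ℝ)) := by
          rw [hT, hstepdef]
          push_cast
          rw [← Real.rpow_natCast (2:ℝ) (k-1-m), ← Real.rpow_add two_pos]
          congr 1
          have : ((k - 1 - m : ℕ) : ℝ) = (k:ℝ) - 1 - (m:ℝ) := by
            rw [Nat.cast_sub hmk', ← hk1]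
          rw [this]; ring
        calc (a.2 (i.pred hi) : ℝ) * step ≤ (T:ℝ) * step :=
          mul_le_mul_of_nonneg_right h1 hstep_pos.le
        _ = (2:ℝ)^(-(m:ℝ)) := h2
  -- injectivity and card
  have hinj : Set.InjOn pt idx := by
    intro a ha b hb hab
    by_contra hne
    have := hsep a ha b hb hne
    rw [hab, dist_self] at this
    exact absurd this (not_lt.2 (Real.rpow_nonneg (by norm_num) _))
  have hcard : (idx.image pt).card = 2 ^ (Mβ + (k - 1 - m) * n) := by
    rw [Finset.card_image_of_injOn hinj, hidx, Finset.card_product,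
      Nat.card_Icc, Fintype.card_piFinset]
    simp [hT, pow_add, pow_mul]
  have := card_le_of_separated (fractalPlaqueUnion n β) F hcov ((2:ℝ)^(-(k:ℝ))) hdiam
    (idx.image pt) (by
      intro p hp
      simp only [Finset.coe_image, Set.mem_image, Finset.mem_coe] at hp
      obtain ⟨a, ha, rfl⟩ := hp
      exact hmem a ha)
    (by
      intro p hp q hq hpq
      obtain ⟨a, ha, rfl⟩ := Finset.mem_image.1 hp
      obtain ⟨b, hb, rfl⟩ := Finset.mem_image.1 hq
      exact hsep a ha b hb (fun h => hpq (by rw [h])))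
  rw [hcard] at this
  exact this

set_option maxHeartbeats 1000000 in
/-- there is a constant `c > 0` such that for every `k ≥ 1`,
every (finite) cover of `A_β` by sets of diameter at most `2^{-k}` has at
least `c·2^{(n+1)kβ/(β+1)}` members. -/
theorem fractal_plaques_covering_lower_bound
    (n : ℕ) (hn : 1 ≤ n) (β : ℝ) (hβ : (n : ℝ) ≤ β) :
    ∃ c : ℝ, 0 < c ∧
      ∀ k : ℕ, 1 ≤ k →
        ∀ F : Finset (Set (EuclideanSpace ℝ (Fin (n + 1)))),
          fractalPlaqueUnion n β ⊆
            ⋃₀ (F : Set (Set (EuclideanSpace ℝ (Fin (n + 1))))) →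
          (∀ U ∈ F, EMetric.diam U ≤ ENNReal.ofReal ((2 : ℝ) ^ (-(k : ℝ)))) →
          c * (2 : ℝ) ^ (((n : ℝ) + 1) * (k : ℝ) * β / (β + 1)) ≤ (F.card : ℝ) := by
  classical
  have hβ1 : (1:ℝ) ≤ β := le_trans (by exact_mod_cast hn) hβ
  have hD : (0:ℝ) < β + 1 := by linarith
  set k₀ : ℕ := ⌈β⌉₊ + 2 with hk₀
  refine ⟨min ((2:ℝ)^(-(((n:ℝ)+1)*(k₀:ℝ)))) ((2:ℝ)^(-((n:ℝ)+β+2))),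
    lt_min (Real.rpow_pos_of_pos two_pos _) (Real.rpow_pos_of_pos two_pos _), ?_⟩
  intro k hk F hcov hdiam
  set X : ℝ := ((n:ℝ)+1) * (k:ℝ) * β / (β+1) with hX
  have hXpos : (0:ℝ) ≤ X := by
    rw [hX]; positivity
  by_cases hkk : k < k₀
  · -- small k : cover is nonempty
    have hAne : ∃ p, p ∈ fractalPlaqueUnion n β := by
      refine ⟨(WithLp.toLp 2 (fun i : Fin (n+1) => if i = 0 then fractalPoint β 1 1 else 0) :
          EuclideanSpace ℝ (Fin (n+1))), ?_⟩
      refine Set.mem_iUnion.2 ⟨1, Set.mem_iUnion.2 ⟨le_refl 1, Set.mem_iUnion.2 ⟨1,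
        Set.mem_iUnion.2 ⟨le_refl 1, Set.mem_iUnion.2 ⟨Nat.one_le_two_pow, ?_, ?_⟩⟩⟩⟩⟩
      · simp
      · intro i hi
        simp only [PiLp.toLp_apply, if_neg hi]
        constructor
        · exact le_refl 0
        · positivity
    obtain ⟨p, hp⟩ := hAne
    obtain ⟨U, hU, -⟩ := hcov hp
    have hF1 : (1:ℝ) ≤ (F.card : ℝ) := by
      have : 0 < F.card := Finset.card_pos.2 ⟨U, hU⟩
      exact_mod_cast this
    have hXle : X ≤ ((n:ℝ)+1)*(k₀:ℝ) := by
      rw [hX, div_le_iff₀ hD]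
      have hkle : (k:ℝ) ≤ (k₀:ℝ) := by exact_mod_cast hkk.le
      have hk0 : (0:ℝ) ≤ (k:ℝ) := Nat.cast_nonneg _
      have h := mul_le_mul_of_nonneg_right hkle (by positivity : (0:ℝ) ≤ ((n:ℝ)+1)*β)
      nlinarith [h, mul_nonneg (by positivity : (0:ℝ) ≤ (n:ℝ)+1) (show (0:ℝ) ≤ (k₀:ℝ) from Nat.cast_nonneg k₀)]
    calc min ((2:ℝ)^(-(((n:ℝ)+1)*(k₀:ℝ)))) ((2:ℝ)^(-((n:ℝ)+β+2))) * (2:ℝ)^X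
        ≤ (2:ℝ)^(-(((n:ℝ)+1)*(k₀:ℝ))) * (2:ℝ)^X :=
          mul_le_mul_of_nonneg_right (min_le_left _ _) (Real.rpow_nonneg (by norm_num) _)
      _ = (2:ℝ)^(X - ((n:ℝ)+1)*(k₀:ℝ)) := by
          rw [← Real.rpow_add two_pos]; ring_nf
      _ ≤ (2:ℝ)^(0:ℝ) := Real.rpow_le_rpow_of_exponent_le (by norm_num) (by linarith)
      _ = 1 := Real.rpow_zero 2
      _ ≤ (F.card : ℝ) := hF1
  · -- large k
    push_neg at hkk
    have hkβ : β + 2 ≤ (k:ℝ) := by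
      have h1 : β ≤ (⌈β⌉₊ : ℝ) := Nat.le_ceil β
      have h2 : (k₀:ℝ) ≤ (k:ℝ) := by exact_mod_cast hkk
      have : ((⌈β⌉₊:ℝ) + 2) = (k₀:ℝ) := by rw [hk₀]; push_cast; ring
      linarith
    set r : ℝ := ((k:ℝ)-1)/(β+1) with hr
    have hr1 : (1:ℝ) ≤ r := by
      rw [hr, le_div_iff₀ hD]; linarith
    have hrD : r * (β+1) = (k:ℝ) - 1 := div_mul_cancel₀ _ hD.ne'
    have hfl1 : (1:ℤ) ≤ ⌊r⌋ := by
      rwa [Int.le_floor, Int.cast_one]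
    set m : ℕ := ⌊r⌋.toNat with hm
    have hm1 : 1 ≤ m := by
      rw [hm]
      exact_mod_cast Int.toNat_le_toNat hfl1
    have hmcast : (m:ℝ) = ((⌊r⌋:ℤ):ℝ) := by
      rw [hm]
      exact_mod_cast Int.toNat_of_nonneg (le_trans zero_le_one hfl1)
    have hmle : (m:ℝ) ≤ r := by rw [hmcast]; exact Int.floor_le r
    have hmge : r - 1 ≤ (m:ℝ) := by
      rw [hmcast]; linarith [Int.sub_one_lt_floor r]
    set Mβ : ℕ := (⌊(m:ℝ)*β⌋).toNat with hMβ
    have hflMnn : (0:ℤ) ≤ ⌊(m:ℝ)*β⌋ := Int.floor_nonneg.2 (by positivity)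
    have hMcast : (Mβ:ℝ) = ((⌊(m:ℝ)*β⌋:ℤ):ℝ) := by
      rw [hMβ]
      exact_mod_cast Int.toNat_of_nonneg hflMnn
    have hMle : (Mβ:ℝ) ≤ (m:ℝ)*β := by rw [hMcast]; exact Int.floor_le _
    have hMge : (m:ℝ)*β - 1 ≤ (Mβ:ℝ) := by
      rw [hMcast]; linarith [Int.sub_one_lt_floor ((m:ℝ)*β)]
    have hk1 : (1:ℕ) ≤ k := hk
    have hmk : m + Mβ ≤ k - 1 := by
      have hcast : (m:ℝ) + (Mβ:ℝ) ≤ ((k-1:ℕ):ℝ) := by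
        rw [Nat.cast_sub hk1, Nat.cast_one]
        have h8 : (m:ℝ)*β ≤ r*β := mul_le_mul_of_nonneg_right hmle (by linarith)
        linarith [hMle, h8, hrD, hmle]
      exact_mod_cast hcast
    have hmk' : m ≤ k - 1 := le_trans (Nat.le_add_right _ _) hmk
    have hcount := key_count n β hβ1 k m hm1 hk1 hmk F hcov hdiam
    set E : ℕ := Mβ + (k - 1 - m) * n with hE
    have hEcast : (E:ℝ) = (Mβ:ℝ) + ((k:ℝ) - 1 - (m:ℝ)) * (n:ℝ) := by
      rw [hE]
      push_cast [Nat.cast_sub hmk', Nat.cast_sub hk1]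
      ring
    -- key exponent inequality
    have hexp : X - ((n:ℝ)+β+2) ≤ (E:ℝ) := by
      rw [hEcast]
      have h4 : (k:ℝ) - 1 - r = r * β := by linarith [hrD]
      have h5 : X ≤ r*β*((n:ℝ)+1) + ((n:ℝ)+1) := by
        rw [hX, div_le_iff₀ hD]
        have h7 : r*(β+1)*(β*((n:ℝ)+1)) = ((k:ℝ)-1)*(β*((n:ℝ)+1)) := by rw [hrD]
        linarith [h7]
      have h2 : ((k:ℝ)-1-r)*(n:ℝ) ≤ ((k:ℝ)-1-(m:ℝ))*(n:ℝ) :=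
        mul_le_mul_of_nonneg_right (by linarith) (Nat.cast_nonneg n)
      have h2' : r*β*(n:ℝ) ≤ ((k:ℝ)-1-(m:ℝ))*(n:ℝ) := by rw [← h4]; exact h2
      have h3 : (r-1)*β ≤ (m:ℝ)*β :=
        mul_le_mul_of_nonneg_right hmge (by linarith)
      linarith [h2', h3, h5, hMge]
    have hcard : ((2:ℝ)^(E:ℝ)) ≤ (F.card : ℝ) := by
      have h1 : ((2^E : ℕ):ℝ) ≤ (F.card : ℝ) := by exact_mod_cast hcount
      rwa [Nat.cast_pow, Nat.cast_ofNat, ← Real.rpow_natCast (2:ℝ) E] at h1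
    calc min ((2:ℝ)^(-(((n:ℝ)+1)*(k₀:ℝ)))) ((2:ℝ)^(-((n:ℝ)+β+2))) * (2:ℝ)^X
        ≤ (2:ℝ)^(-((n:ℝ)+β+2)) * (2:ℝ)^X :=
          mul_le_mul_of_nonneg_right (min_le_right _ _) (Real.rpow_nonneg (by norm_num) _)
      _ = (2:ℝ)^(X - ((n:ℝ)+β+2)) := by
          rw [← Real.rpow_add two_pos]; ring_nf
      _ ≤ (2:ℝ)^(E:ℝ) := Real.rpow_le_rpow_of_exponent_le (by norm_num) hexp
      _ ≤ (F.card : ℝ) := hcard
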